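/- Let J : ℝⁿ → ℝ ∪ {+∞} be proper convex lower semicontinuous, and for data x let y(x) denote the unique minimizer of E(y;x) = (1/2)‖y − x‖² + J(y). Suppose there exists ξ† ∈ ∂J(y(x†)) and a constant c ∈ (0,1) such that ⟨ξ†, y(x†) − y⟩ ≤ c‖y − y(x†)‖² for all y ∈ ℝⁿ. Then for any xᵟ with ‖xᵟ − x†‖ ≤ δ, one has ‖y(xᵟ) − y(x†)‖ ≤ δ/(1−c). -/

import Mathlib

open scoped InnerProductSpace

/-- The energy `E(y;x) = (1/2)‖y − x‖² + J(y)` with extended-real `J`. -/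
noncomputable def Efun {n : ℕ} (J : EuclideanSpace ℝ (Fin n) → EReal)
    (x y : EuclideanSpace ℝ (Fin n)) : EReal :=
  (((1/2) * ‖y - x‖^2 : ℝ) : EReal) + J y

/-- First-order optimality: a minimizer `y0` of `E(·;x)` satisfies
`x − y0 ∈ ∂J(y0)` (tested against a point `z` where `J` is finite). -/
lemma firstOrder {n : ℕ} (J : EuclideanSpace ℝ (Fin n) → EReal)
    (hconv : ∀ y z : EuclideanSpace ℝ (Fin n), ∀ t : ℝ, 0 ≤ t → t ≤ 1 →
      J (t • y + (1 - t) • z) ≤ (t : EReal) * J y + ((1 - t : ℝ) : EReal) * J z)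
    (x y0 z : EuclideanSpace ℝ (Fin n)) (a b : ℝ)
    (ha : J y0 = (a : EReal)) (hb : J z = (b : EReal))
    (hmin : ∀ y, Efun J x y0 ≤ Efun J x y) :
    a + ⟪x - y0, z - y0⟫_ℝ ≤ b := by
  set K : ℝ := ‖z - y0‖^2 with hK
  have hK0 : 0 ≤ K := by positivity
  have key : ∀ t : ℝ, 0 < t → t ≤ 1 →
      0 ≤ ⟪y0 - x, z - y0⟫_ℝ + b - a + t/2 * K := by
    intro t ht ht1
    have h := (hmin (t • z + (1 - t) • y0)).trans
      (add_le_add_right (hconv z y0 t ht.le ht1) _)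
    rw [ha, hb] at h
    have hco : (t : EReal) * (b : EReal) + ((1 - t : ℝ) : EReal) * (a : EReal)
        = ((t * b + (1 - t) * a : ℝ) : EReal) := by
      rw [← EReal.coe_mul, ← EReal.coe_mul, ← EReal.coe_add]
    rw [hco] at h
    unfold Efun at h
    rw [ha, ← EReal.coe_add, ← EReal.coe_add, EReal.coe_le_coe_iff] at h
    have hop : t • z + (1 - t) • y0 - x = (y0 - x) + t • (z - y0) := by
      module
    rw [hop] at h
    have hns : ‖(y0 - x) + t • (z - y0)‖^2
        = ‖y0 - x‖^2 + 2 * (t * ⟪y0 - x, z - y0⟫_ℝ) + t^2 * K := by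
      rw [@norm_add_sq_real, real_inner_smul_right, norm_smul,
        Real.norm_eq_abs, abs_of_pos ht, mul_pow]
    rw [hns] at h
    have h2 : 0 ≤ t * (⟪y0 - x, z - y0⟫_ℝ + b - a + t/2 * K) := by nlinarith
    exact nonneg_of_mul_nonneg_right h2 ht
  have hfin : 0 ≤ ⟪y0 - x, z - y0⟫_ℝ + b - a := by
    by_contra hC
    push_neg at hC
    set C : ℝ := ⟪y0 - x, z - y0⟫_ℝ + b - a with hCdef
    have ht0 : 0 < min 1 (-C / (K + 1)) := by
      apply lt_min one_pos
      apply div_pos (by linarith) (by linarith)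
    have := key (min 1 (-C / (K + 1))) ht0 (min_le_left _ _)
    have hle : min 1 (-C / (K + 1)) ≤ -C / (K + 1) := min_le_right _ _
    have h3 : min 1 (-C / (K + 1)) * K ≤ (-C / (K + 1)) * K :=
      mul_le_mul_of_nonneg_right hle hK0
    have h4 : (-C / (K + 1)) * K ≤ -C := by
      rw [div_mul_eq_mul_div, div_le_iff₀ (by linarith : (0:ℝ) < K + 1)]
      nlinarith
    linarith
  have : ⟪x - y0, z - y0⟫_ℝ = -⟪y0 - x, z - y0⟫_ℝ := by
    rw [← inner_neg_left]; congr 1; abel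
  rw [this]; linarith
/-- linear stability rate under the quadratic variational source
condition.  If `ξ† ∈ ∂J(y†)` satisfies `⟪ξ†, y† − y⟫ ≤ c‖y − y†‖²` for all `y`
with `c ∈ (0,1)`, and `y†`, `yᵟ` minimize `E(·;x†)`, `E(·;xᵟ)` respectively with
`‖xᵟ − x†‖ ≤ δ`, then `‖yᵟ − y†‖ ≤ δ/(1−c)`. -/
theorem stmt1 (n : ℕ) (J : EuclideanSpace ℝ (Fin n) → EReal)
    (hproper : ∃ y, J y ≠ ⊤) (hnotbot : ∀ y, J y ≠ ⊥)
    (hconv : ∀ y z : EuclideanSpace ℝ (Fin n), ∀ t : ℝ, 0 ≤ t → t ≤ 1 →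
      J (t • y + (1 - t) • z) ≤ (t : EReal) * J y + ((1 - t : ℝ) : EReal) * J z)
    (hlsc : LowerSemicontinuous J)
    (xdag xdel ydag ydel ξ : EuclideanSpace ℝ (Fin n)) (c δ : ℝ)
    (hc0 : 0 < c) (hc1 : c < 1)
    (hmin_dag : ∀ y, Efun J xdag ydag ≤ Efun J xdag y)
    (hmin_del : ∀ y, Efun J xdel ydel ≤ Efun J xdel y)
    (hsub : ∀ z, J ydag + ((⟪ξ, z - ydag⟫_ℝ : ℝ) : EReal) ≤ J z)
    (hvsc : ∀ y, ⟪ξ, ydag - y⟫_ℝ ≤ c * ‖y - ydag‖^2)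
    (hnoise : ‖xdel - xdag‖ ≤ δ) :
    ‖ydel - ydag‖ ≤ δ / (1 - c) := by
  obtain ⟨y0, hy0⟩ := hproper
  -- finiteness of J at the two minimizers
  have hfin : ∀ (x ym : EuclideanSpace ℝ (Fin n)),
      (∀ y, Efun J x ym ≤ Efun J x y) → J ym ≠ ⊤ := by
    intro x ym hmin hT
    have h := hmin y0
    unfold Efun at h
    rw [hT, EReal.add_top_of_ne_bot (EReal.coe_ne_bot _)] at h
    have htop : (((1/2) * ‖y0 - x‖^2 : ℝ) : EReal) + J y0 = ⊤ := top_le_iff.mp h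
    exact absurd htop (EReal.add_lt_top (EReal.coe_ne_top _) hy0).ne
  have hdagT : J ydag ≠ ⊤ := hfin xdag ydag hmin_dag
  have hdelT : J ydel ≠ ⊤ := hfin xdel ydel hmin_del
  have ha : J ydag = ((J ydag).toReal : EReal) := (EReal.coe_toReal hdagT (hnotbot _)).symm
  have hb : J ydel = ((J ydel).toReal : EReal) := (EReal.coe_toReal hdelT (hnotbot _)).symm
  set a := (J ydag).toReal
  set b := (J ydel).toReal
  have h1 := firstOrder J hconv xdag ydag ydel a b ha hb hmin_dag
  have h2 := firstOrder J hconv xdel ydel ydag b a hb ha hmin_del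
  set w := ydel - ydag with hw
  have e1 : ⟪xdel - ydel, ydag - ydel⟫_ℝ = -⟪xdel - ydel, w⟫_ℝ := by
    rw [show ydag - ydel = -w by rw [hw]; abel, inner_neg_right]
  rw [e1] at h2
  have expand : ⟪xdel - xdag, w⟫_ℝ - ‖w‖^2
      = ⟪xdel - ydel, w⟫_ℝ - ⟪xdag - ydag, w⟫_ℝ := by
    rw [← real_inner_self_eq_norm_sq]
    simp only [inner_sub_left, hw, inner_sub_right]
    ring
  have hmono : ‖w‖^2 ≤ ⟪xdel - xdag, w⟫_ℝ := by linarith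
  have hcs : ⟪xdel - xdag, w⟫_ℝ ≤ ‖xdel - xdag‖ * ‖w‖ := real_inner_le_norm _ _
  have hδ0 : 0 ≤ δ := le_trans (norm_nonneg _) hnoise
  have hwδ : ‖w‖ ≤ δ := by
    rcases (norm_nonneg w).eq_or_lt with h0 | h0
    · rw [← h0]; exact hδ0
    · have : ‖w‖ * ‖w‖ ≤ δ * ‖w‖ := by
        nlinarith [mul_le_mul_of_nonneg_right hnoise (norm_nonneg w)]
      exact le_of_mul_le_mul_right this h0
  calc ‖w‖ ≤ δ := hwδ
    _ ≤ δ / (1 - c) := by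
        rw [le_div_iff₀ (by linarith : (0:ℝ) < 1 - c)]
        nlinarith
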